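/- For every finite graph G, the linear rank-width of G is at most the lettericity of G: lrwd(G) ≤ lett(G). -/

import Mathlib

open scoped Classical

/-- A letter realisation of a graph `G` over a decoder with alphabet `α` and arc
relation `D`: a letter assignment `ℓ` and an ordering `c` (a bijection onto
`Fin (Fintype.card V)`, i.e. onto `[n]`) such that distinct vertices `x, y` are
adjacent iff `(ℓ x, ℓ y) ∈ D` and `c x < c y`, or `(ℓ y, ℓ x) ∈ D` and `c y < c x`. -/
def IsLetterRealisation {V α : Type} [Fintype V] (G : SimpleGraph V)
    (D : α → α → Prop) (ℓ : V → α) (c : V ≃ Fin (Fintype.card V)) : Prop :=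
  ∀ x y : V, x ≠ y →
    (G.Adj x y ↔ (D (ℓ x) (ℓ y) ∧ c x < c y) ∨ (D (ℓ y) (ℓ x) ∧ c y < c x))

/-- The lettericity of `G`: the least `k` such that `G` has a letter realisation
over a decoder whose alphabet has (at most) `k` letters. -/
noncomputable def lettericity {V : Type} [Fintype V] (G : SimpleGraph V) : ℕ :=
  sInf {k | ∃ (D : Fin k → Fin k → Prop) (ℓ : V → Fin k) (c : V ≃ Fin (Fintype.card V)),
    IsLetterRealisation G D ℓ c}

/-- The cut-rank of a vertex subset `X`: the GF(2)-rank of the submatrix of the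
adjacency matrix with rows indexed by `X` and columns by its complement. -/
noncomputable def cutRank {V : Type} [Fintype V] (G : SimpleGraph V) (X : Set V) : ℕ :=
  Matrix.rank (Matrix.of fun (x : X) (y : ↥Xᶜ) => if G.Adj x.1 y.1 then (1 : ZMod 2) else 0)

/-- The linear rank-width of `G`: the minimum over all linear orders of the
vertices of the maximum cut-rank of an initial segment. -/
noncomputable def linRankWidth {V : Type} [Fintype V] (G : SimpleGraph V) : ℕ :=
  ⨅ σ : V ≃ Fin (Fintype.card V),
    (Finset.Ico 1 (Fintype.card V)).sup fun i => cutRank G {x : V | (σ x : ℕ) < i}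

lemma lett_set_nonempty {V : Type} [Fintype V] (G : SimpleGraph V) :
    {k | ∃ (D : Fin k → Fin k → Prop) (ℓ : V → Fin k) (c : V ≃ Fin (Fintype.card V)),
      IsLetterRealisation G D ℓ c}.Nonempty := by
  classical
  obtain ⟨c⟩ : Nonempty (V ≃ Fin (Fintype.card V)) := ⟨Fintype.equivFin V⟩
  refine ⟨Fintype.card V, fun i j => G.Adj (c.symm i) (c.symm j), c, c, ?_⟩
  intro x y hxy
  have hD : G.Adj (c.symm (c x)) (c.symm (c y)) ↔ G.Adj x y := by simp
  have hD' : G.Adj (c.symm (c y)) (c.symm (c x)) ↔ G.Adj x y := by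
    simp [G.adj_comm]
  constructor
  · intro h
    rcases lt_or_gt_of_ne (fun hc => hxy (c.injective hc)) with hlt | hgt
    · exact Or.inl ⟨hD.mpr h, hlt⟩
    · exact Or.inr ⟨hD'.mpr h, hgt⟩
  · rintro (⟨h, -⟩ | ⟨h, -⟩)
    · exact hD.mp h
    · exact hD'.mp h

/-- the linear rank-width of `G` is at most its lettericity. -/
theorem stmt_6 {V : Type} [Fintype V] (G : SimpleGraph V) :
    linRankWidth G ≤ lettericity G := by
  classical
  obtain ⟨D, ℓ, c, hreal⟩ := Nat.sInf_mem (lett_set_nonempty G)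
  set k := lettericity G with hk
  have : Nonempty (V ≃ Fin (Fintype.card V)) := ⟨c⟩
  refine le_trans (ciInf_le (OrderBot.bddBelow _) c) ?_
  refine Finset.sup_le fun i _ => ?_
  -- bound cutRank of the prefix by k
  set X : Set V := {x : V | (c x : ℕ) < i} with hX
  set A : Matrix X (Fin k) (ZMod 2) :=
    Matrix.of fun x a => if ℓ x.1 = a then 1 else 0 with hA
  set B : Matrix (Fin k) ↥Xᶜ (ZMod 2) :=
    Matrix.of fun a y => if D a (ℓ y.1) then 1 else 0 with hB
  have hM : (Matrix.of fun (x : X) (y : ↥Xᶜ) =>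
      if G.Adj x.1 y.1 then (1 : ZMod 2) else 0) = A * B := by
    ext x y
    have hx : (c x.1 : ℕ) < i := x.2
    have hy : ¬ (c y.1 : ℕ) < i := y.2
    have hlt : c x.1 < c y.1 := by
      have : (c x.1 : ℕ) < (c y.1 : ℕ) := lt_of_lt_of_le hx (not_lt.mp hy)
      exact this
    have hne : x.1 ≠ y.1 := by
      intro h; rw [h] at hlt; exact lt_irrefl _ hlt
    have hadj : G.Adj x.1 y.1 ↔ D (ℓ x.1) (ℓ y.1) := by
      rw [hreal x.1 y.1 hne]
      constructor
      · rintro (⟨h, -⟩ | ⟨-, h⟩)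
        · exact h
        · exact absurd h (lt_asymm hlt)
      · intro h; exact Or.inl ⟨h, hlt⟩
    simp only [Matrix.mul_apply, hA, hB, Matrix.of_apply, ite_mul, one_mul, zero_mul,
      Finset.sum_ite_eq, Finset.mem_univ, if_true]
    simp [hadj]
    refine Eq.symm ((Fintype.sum_eq_single (ℓ x.1) ?_).trans ?_)
    · intro j hj; exact if_neg (Ne.symm hj)
    · simp
  rw [cutRank, hM]
  have h1 : (A * B).rank ≤ B.rank := Matrix.rank_mul_le_right A B
  have h2 : B.rank ≤ Fintype.card (Fin k) := Matrix.rank_le_card_height B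
  have h3 := h1.trans (h2.trans_eq (Fintype.card_fin k))
  convert h3 using 2
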